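/- Let q be a prime with q ≡ 3 (mod 8). Then there exist integers x and y with x² − q·y² = −2, while the equation x² − q·y² = 2 has no integer solutions. -/

import Mathlib

/-- Mod 8, `x² - q y² = 2` is impossible when `q ≡ 3 (mod 8)`. -/
lemma no_two_aux (q : ℕ) (hq : q % 8 = 3) : ∀ x y : ℤ, x ^ 2 - (q : ℤ) * y ^ 2 ≠ 2 := by
  intro x y h
  have hd : ∀ a b : ZMod 8, a ^ 2 - 3 * b ^ 2 ≠ 2 := by decide
  apply hd (x : ZMod 8) (y : ZMod 8)
  have hq8 : ((q : ℕ) : ZMod 8) = 3 := by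
    rw [← ZMod.natCast_mod, hq]; rfl
  have := congrArg (fun z : ℤ => (z : ZMod 8)) h
  push_cast at this
  rw [hq8] at this
  exact this

/-- A nonnegative factor of a square, coprime to the complement, is a square. -/
lemma sq_of_coprime_nonneg {m n c : ℤ} (hm : 0 ≤ m) (h : IsCoprime m n)
    (heq : m * n = c ^ 2) : ∃ a : ℤ, m = a ^ 2 := by
  obtain ⟨a, ha | ha⟩ := Int.sq_of_isCoprime h heq
  · exact ⟨a, ha⟩
  · have ha0 : a = 0 := by nlinarith [sq_nonneg a]
    exact ⟨0, by simp [ha, ha0]⟩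

set_option maxHeartbeats 2000000 in
/-- For a prime `q ≡ 3 (mod 8)`, the equation `x² − q·y² = −2` has an integer
solution, while `x² − q·y² = 2` has none. -/
theorem sq_sub_q_mul_sq_eq_neg_two
    (q : ℕ) [Fact (Nat.Prime q)] (hq : q % 8 = 3) :
    (∃ x y : ℤ, x ^ 2 - (q : ℤ) * y ^ 2 = -2) ∧
      ∀ x y : ℤ, x ^ 2 - (q : ℤ) * y ^ 2 ≠ 2 := by
  classical
  have hp : Nat.Prime q := Fact.out
  have hq3 : (3 : ℤ) ≤ (q : ℤ) := by exact_mod_cast (by omega : 3 ≤ q)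
  have hqZ : Prime ((q : ℕ) : ℤ) := Nat.prime_iff_prime_int.mp hp
  refine ⟨?_, no_two_aux q hq⟩
  obtain ⟨x0, y0, hxy0, hy0⟩ :=
    Pell.exists_of_not_isSquare (d := (q : ℤ)) (by exact_mod_cast (by omega : 0 < q))
      hqZ.not_isSquare
  set P : ℕ → Prop := fun n => n ≠ 0 ∧ ∃ x : ℤ, x ^ 2 - (q : ℤ) * (n : ℤ) ^ 2 = 1 with hPdef
  have hex : ∃ n, P n := by
    refine ⟨y0.natAbs, Int.natAbs_ne_zero.mpr hy0, x0, ?_⟩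
    rw [Int.natCast_natAbs, sq_abs]; exact hxy0
  obtain ⟨hN0, x, hx⟩ := Nat.find_spec hex
  set N : ℤ := ((Nat.find hex : ℕ) : ℤ) with hNdef
  have hN1 : 1 ≤ N := by
    rw [hNdef]
    have : 1 ≤ Nat.find hex := Nat.one_le_iff_ne_zero.mpr hN0
    exact_mod_cast this
  set X : ℤ := |x| with hXdef
  have hX2 : X ^ 2 - (q : ℤ) * N ^ 2 = 1 := by rw [hXdef, sq_abs]; exact hx
  have hX0 : 0 ≤ X := abs_nonneg x
  have hXge2 : 2 ≤ X := by nlinarith [hX2, hq3, hN1, hX0]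
  rcases Int.even_or_odd X with ⟨k, hk⟩ | ⟨k, hk⟩
  · -- X even : extract a solution of x² - q y² = ±2
    have hfac : (X - 1) * (X + 1) = (q : ℤ) * N ^ 2 := by ring_nf; linarith [hX2]
    have hcop : IsCoprime (X - 1) (X + 1) := ⟨k, 1 - k, by rw [hk]; ring⟩
    have hdvd : ((q : ℕ) : ℤ) ∣ (X - 1) * (X + 1) := ⟨N ^ 2, hfac⟩
    rcases (hqZ.2.2 _ _ hdvd) with ⟨t, ht⟩ | ⟨t, ht⟩
    · -- q ∣ X - 1 : leads to b² - q a² = 2, impossible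
      exfalso
      have hmul : t * (X + 1) = N ^ 2 := by
        have h4 : (q : ℤ) * (t * (X + 1)) = (q : ℤ) * N ^ 2 := by
          rw [← hfac, ht]; ring
        exact mul_left_cancel₀ (by positivity) h4
      have hcop' : IsCoprime t (X + 1) :=
        (hcop.of_isCoprime_of_dvd_left ⟨q, by rw [ht]; ring⟩)
      have ht0 : 0 ≤ t := by nlinarith [hXge2, hq3, ht]
      obtain ⟨a, hA⟩ := sq_of_coprime_nonneg ht0 hcop' hmul
      obtain ⟨b, hB⟩ := sq_of_coprime_nonneg (by linarith : (0:ℤ) ≤ X + 1)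
        hcop'.symm (by rw [mul_comm]; exact hmul)
      exact no_two_aux q hq b a (by rw [← hB, ← hA]; linarith [ht])
    · -- q ∣ X + 1 : gives a² - q b² = -2
      have hmul : (X - 1) * t = N ^ 2 := by
        have h4 : (q : ℤ) * ((X - 1) * t) = (q : ℤ) * N ^ 2 := by
          rw [← hfac, ht]; ring
        exact mul_left_cancel₀ (by positivity) h4
      have hcop' : IsCoprime (X - 1) t :=
        (hcop.of_isCoprime_of_dvd_right ⟨q, by rw [ht]; ring⟩)
      obtain ⟨a, hA⟩ := sq_of_coprime_nonneg (by linarith : (0:ℤ) ≤ X - 1) hcop' hmul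
      have ht0 : 0 ≤ t := by nlinarith [hXge2, hq3, ht]
      obtain ⟨b, hB⟩ := sq_of_coprime_nonneg ht0 hcop'.symm
        (by rw [mul_comm]; exact hmul)
      exact ⟨a, b, by rw [← hA, ← hB]; linarith [ht]⟩
  · -- X odd : descent, contradicting minimality of N
    exfalso
    have hk1 : 1 ≤ k := by omega
    -- N is even
    have hNeven : Even N := by
      rcases Int.even_or_odd N with hN | ⟨j, hj⟩
      · exact hN
      · exfalso
        have h4 : (q : ℤ) = 4 * (k ^ 2 + k - (q : ℤ) * j ^ 2 - (q : ℤ) * j) := by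
          have : (q : ℤ) * (2 * j + 1) ^ 2 = (2 * k + 1) ^ 2 - 1 := by
            rw [← hj, ← hk]; linarith [hX2]
          nlinarith [this]
        have : ((4 : ℕ) : ℤ) ∣ (q : ℤ) := ⟨_, h4⟩
        have : (4 : ℕ) ∣ q := by exact_mod_cast this
        omega
    obtain ⟨c, hc⟩ := hNeven
    have hcN : N = 2 * c := by omega
    have hkk : k * (k + 1) = (q : ℤ) * c ^ 2 := by
      have : (2 * k + 1) ^ 2 - (q : ℤ) * (2 * c) ^ 2 = 1 := by rw [← hcN, ← hk]; exact hX2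
      nlinarith [this]
    have hcop : IsCoprime k (k + 1) := ⟨-1, 1, by ring⟩
    have hdvd : ((q : ℕ) : ℤ) ∣ k * (k + 1) := ⟨c ^ 2, hkk⟩
    rcases (hqZ.2.2 _ _ hdvd) with ⟨t, ht⟩ | ⟨t, ht⟩
    · -- q ∣ k : descent to a smaller solution
      have hmul : t * (k + 1) = c ^ 2 := by
        have h4 : (q : ℤ) * (t * (k + 1)) = (q : ℤ) * c ^ 2 := by rw [← hkk, ht]; ring
        exact mul_left_cancel₀ (by positivity) h4
      have hcop' : IsCoprime t (k + 1) :=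
        hcop.of_isCoprime_of_dvd_left ⟨q, by rw [ht]; ring⟩
      have ht0 : 0 ≤ t := by nlinarith [hk1, hq3, ht]
      obtain ⟨b, hB⟩ := sq_of_coprime_nonneg ht0 hcop' hmul
      obtain ⟨a, hA⟩ := sq_of_coprime_nonneg (by linarith : (0:ℤ) ≤ k + 1)
        hcop'.symm (by rw [mul_comm]; exact hmul)
      -- a² - q b² = 1, with 0 < |b| < N
      have hb0 : b ≠ 0 := by
        rintro rfl
        have ht0' : t = 0 := by simpa using hB
        rw [ht0', mul_zero] at ht
        omega
      have hsol : a ^ 2 - (q : ℤ) * b ^ 2 = 1 := by rw [← hA, ← hB]; linarith [ht]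
      have hc2 : c ^ 2 = b ^ 2 * a ^ 2 := by rw [← hA, ← hB]; linarith [hmul]
      have ha2 : 2 ≤ a ^ 2 := by rw [← hA]; linarith
      have hb1 : 1 ≤ |b| := Int.one_le_abs (by exact_mod_cast hb0)
      have hblt : |b| < N := by
        nlinarith [sq_abs b, hN1, hc2, ha2, hb1, sq_nonneg c,
          (by rw [hcN] : N ^ 2 = (2 * c) ^ 2), abs_nonneg b]
      have hPb : P b.natAbs := by
        refine ⟨Int.natAbs_ne_zero.mpr hb0, a, ?_⟩
        rw [Int.natCast_natAbs, sq_abs]; exact hsol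
      have hlt : b.natAbs < Nat.find hex := by
        have h5 : (b.natAbs : ℤ) < N := by rw [Int.natCast_natAbs]; exact hblt
        rw [hNdef] at h5
        exact_mod_cast h5
      exact Nat.find_min hex hlt hPb
    · -- q ∣ k + 1 : a² ≡ -1 (mod q), impossible for q ≡ 3 (mod 4)
      have hmul : k * t = c ^ 2 := by
        have h4 : (q : ℤ) * (k * t) = (q : ℤ) * c ^ 2 := by rw [← hkk, ht]; ring
        exact mul_left_cancel₀ (by positivity) h4
      have hcop' : IsCoprime k t :=
        hcop.of_isCoprime_of_dvd_right ⟨q, by rw [ht]; ring⟩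
      obtain ⟨a, hA⟩ := sq_of_coprime_nonneg (by linarith : (0:ℤ) ≤ k) hcop' hmul
      have heq : a ^ 2 + 1 = (q : ℤ) * t := by rw [← hA]; linarith [ht]
      have hzm : ((a : ZMod q)) ^ 2 = -1 := by
        have := congrArg (fun z : ℤ => (z : ZMod q)) heq
        push_cast at this
        rw [ZMod.natCast_self] at this
        linear_combination this
      have hsq : IsSquare (-1 : ZMod q) := ⟨a, by rw [← hzm]; ring⟩
      have := (ZMod.exists_sq_eq_neg_one_iff (p := q)).mp hsq
      omega
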